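/- arXiv:2404.07864 — 2 statements merged into one kernel-verified Lean document; each statement's English description precedes it below -/
import Mathlib

section
/- For all a, b ∈ ℝ, ∫_{−∞}^{∞} Φ(a + bx) φ(x) dx = Φ(a / √(1 + b²)), where φ and Φ are the standard normal PDF and CDF. -/
open MeasureTheory Real

/-- Standard normal probability density function. -/
noncomputable def stdPdf (x : ℝ) : ℝ := (Real.sqrt (2 * π))⁻¹ * Real.exp (-x ^ 2 / 2)

/-- Standard normal cumulative distribution function. -/
noncomputable def stdCdf (x : ℝ) : ℝ := ∫ t in Set.Iic x, stdPdf t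

lemma stdPdf_nonneg (x : ℝ) : 0 ≤ stdPdf x := by
  unfold stdPdf
  positivity

lemma measurable_stdPdf : Measurable stdPdf := by
  unfold stdPdf
  fun_prop

lemma integrable_stdPdf : Integrable stdPdf := by
  have h : Integrable (fun x : ℝ => Real.exp (-(1/2 : ℝ) * x ^ 2)) volume :=
    integrable_exp_neg_mul_sq (by norm_num)
  have : stdPdf = fun x => (Real.sqrt (2 * π))⁻¹ * Real.exp (-(1/2 : ℝ) * x ^ 2) := by
    funext x; unfold stdPdf; ring_nf
  rw [this]
  exact h.const_mul _

lemma integral_stdPdf : ∫ x, stdPdf x = 1 := by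
  unfold stdPdf
  rw [integral_const_mul]
  have : (fun x : ℝ => Real.exp (-x ^ 2 / 2)) = fun x => Real.exp (-(1/2 : ℝ) * x ^ 2) := by
    funext x; ring_nf
  rw [this, integral_gaussian]
  have hπ : (0 : ℝ) < π := Real.pi_pos
  rw [show π / (1/2 : ℝ) = 2 * π by ring]
  rw [inv_mul_cancel₀ (by positivity : Real.sqrt (2 * π) ≠ 0)]

/-- Translation form of the CDF. -/
lemma stdCdf_eq_shift (a y : ℝ) : stdCdf (a + y) = ∫ s in Set.Iic a, stdPdf (s + y) := by
  unfold stdCdf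
  have hemb : MeasurableEmbedding (fun s : ℝ => s + y) :=
    (Homeomorph.addRight y).measurableEmbedding
  have hmap : Measure.map (fun s : ℝ => s + y) volume = volume :=
    map_add_right_eq_self volume y
  calc ∫ t in Set.Iic (a + y), stdPdf t
      = ∫ t in Set.Iic (a + y), stdPdf t ∂(Measure.map (fun s : ℝ => s + y) volume) := by
        rw [hmap]
    _ = ∫ s in (fun s : ℝ => s + y) ⁻¹' Set.Iic (a + y), stdPdf (s + y) := by
        rw [hemb.setIntegral_map]
    _ = ∫ s in Set.Iic a, stdPdf (s + y) := by
        congr 1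
        ext s
        simp [Set.mem_Iic]

/-- Completing the square identity (pointwise). -/
lemma product_pdf_eq (b s x : ℝ) :
    stdPdf (s + b * x) * stdPdf x =
      (2 * π)⁻¹ * Real.exp (-s ^ 2 / (2 * (1 + b ^ 2))) *
        Real.exp (-((1 + b ^ 2) / 2) * (x + b * s / (1 + b ^ 2)) ^ 2) := by
  have hc : (0 : ℝ) < 1 + b ^ 2 := by positivity
  unfold stdPdf
  have h2 : (Real.sqrt (2 * π))⁻¹ * (Real.sqrt (2 * π))⁻¹ = (2 * π)⁻¹ := by
    rw [← mul_inv, Real.mul_self_sqrt (by positivity)]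
  have hexp : -(s + b * x) ^ 2 / 2 + -x ^ 2 / 2 =
      -s ^ 2 / (2 * (1 + b ^ 2)) + -((1 + b ^ 2) / 2) * (x + b * s / (1 + b ^ 2)) ^ 2 := by
    field_simp
    ring
  calc (Real.sqrt (2 * π))⁻¹ * Real.exp (-(s + b * x) ^ 2 / 2) *
      ((Real.sqrt (2 * π))⁻¹ * Real.exp (-x ^ 2 / 2))
      = (Real.sqrt (2 * π))⁻¹ * (Real.sqrt (2 * π))⁻¹ *
          Real.exp (-(s + b * x) ^ 2 / 2 + -x ^ 2 / 2) := by
        rw [Real.exp_add]; ring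
    _ = (2 * π)⁻¹ * Real.exp (-s ^ 2 / (2 * (1 + b ^ 2)) +
          -((1 + b ^ 2) / 2) * (x + b * s / (1 + b ^ 2)) ^ 2) := by rw [h2, hexp]
    _ = _ := by rw [Real.exp_add]; ring

/-- Gaussian product integral: integrating out `x`. -/
lemma gaussian_product_integral (b s : ℝ) :
    ∫ x, stdPdf (s + b * x) * stdPdf x =
      (Real.sqrt (2 * π * (1 + b ^ 2)))⁻¹ * Real.exp (-s ^ 2 / (2 * (1 + b ^ 2))) := by
  have hc : (0 : ℝ) < 1 + b ^ 2 := by positivity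
  simp_rw [product_pdf_eq b s]
  rw [integral_const_mul]
  have hshift : ∫ x : ℝ, Real.exp (-((1 + b ^ 2) / 2) * (x + b * s / (1 + b ^ 2)) ^ 2) =
      ∫ x : ℝ, Real.exp (-((1 + b ^ 2) / 2) * x ^ 2) :=
    integral_add_right_eq_self (fun x => Real.exp (-((1 + b ^ 2) / 2) * x ^ 2)) _
  rw [hshift, integral_gaussian]
  have h1 : Real.sqrt (π / ((1 + b ^ 2) / 2)) = Real.sqrt (2 * π) / Real.sqrt (1 + b ^ 2) := by
    rw [show π / ((1 + b ^ 2) / 2) = (2 * π) / (1 + b ^ 2) by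
      rw [div_div_eq_mul_div]; ring,
      Real.sqrt_div' _ (by positivity)]
  rw [h1]
  have hconst : (2 * π)⁻¹ * (Real.sqrt (2 * π) / Real.sqrt (1 + b ^ 2)) =
      (Real.sqrt (2 * π * (1 + b ^ 2)))⁻¹ := by
    rw [Real.sqrt_mul (x := 2 * π) (by positivity)]
    have hA : Real.sqrt (2 * π) ^ 2 = 2 * π := Real.sq_sqrt (by positivity)
    have hA0 : (0 : ℝ) < Real.sqrt (2 * π) := Real.sqrt_pos.mpr (by positivity)
    have hB0 : (0 : ℝ) < Real.sqrt (1 + b ^ 2) := Real.sqrt_pos.mpr hc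
    rw [← hA]
    rw [Real.sqrt_sq hA0.le]
    field_simp
  linear_combination Real.exp (-s ^ 2 / (2 * (1 + b ^ 2))) * hconst

/-- Rescaling step. -/
lemma scaled_cdf (b a : ℝ) :
    ∫ s in Set.Iic a,
        (Real.sqrt (2 * π * (1 + b ^ 2)))⁻¹ * Real.exp (-s ^ 2 / (2 * (1 + b ^ 2)))
      = stdCdf (a / Real.sqrt (1 + b ^ 2)) := by
  have hc : (0 : ℝ) < 1 + b ^ 2 := by positivity
  set r : ℝ := Real.sqrt (1 + b ^ 2) with hr_def
  have hr : (0 : ℝ) < r := Real.sqrt_pos.mpr hc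
  set f : ℝ → ℝ := fun s =>
    (Real.sqrt (2 * π * (1 + b ^ 2)))⁻¹ * Real.exp (-s ^ 2 / (2 * (1 + b ^ 2))) with hf_def
  have hemb : MeasurableEmbedding (fun u : ℝ => r * u) :=
    (Homeomorph.mulLeft₀ r hr.ne').measurableEmbedding
  have hmap : Measure.map (fun u : ℝ => r * u) volume = ENNReal.ofReal |r⁻¹| • volume :=
    Real.map_volume_mul_left hr.ne'
  have hfp : ∀ u : ℝ, f (r * u) = r⁻¹ * stdPdf u := by
    intro u
    simp only [hf_def, stdPdf]
    have h1 : Real.sqrt (2 * π * (1 + b ^ 2)) = Real.sqrt (2 * π) * r := by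
      rw [hr_def, Real.sqrt_mul (by positivity)]
    have h2 : (r * u) ^ 2 = (1 + b ^ 2) * u ^ 2 := by
      rw [mul_pow, hr_def, Real.sq_sqrt hc.le]
    rw [h1, h2, show -((1 + b ^ 2) * u ^ 2) / (2 * (1 + b ^ 2)) = -u ^ 2 / 2 from by
      field_simp, mul_inv]
    ring
  have key : ∫ u in Set.Iic (a / r), f (r * u) = r⁻¹ * ∫ s in Set.Iic a, f s := by
    have hpre : (fun u : ℝ => r * u) ⁻¹' Set.Iic a = Set.Iic (a / r) := by
      ext u
      simp only [Set.mem_preimage, Set.mem_Iic]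
      rw [← le_div_iff₀' hr]
    calc ∫ u in Set.Iic (a / r), f (r * u)
        = ∫ u in (fun u : ℝ => r * u) ⁻¹' Set.Iic a, f (r * u) := by rw [hpre]
      _ = ∫ s in Set.Iic a, f s ∂(Measure.map (fun u : ℝ => r * u) volume) :=
          (hemb.setIntegral_map f _).symm
      _ = r⁻¹ * ∫ s in Set.Iic a, f s := by
          rw [hmap, Measure.restrict_smul, integral_smul_measure,
            ENNReal.toReal_ofReal (abs_nonneg _), abs_of_pos (inv_pos.mpr hr), smul_eq_mul]
  have key2 : ∫ u in Set.Iic (a / r), f (r * u) = r⁻¹ * stdCdf (a / r) := by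
    simp_rw [hfp]
    rw [integral_const_mul]
    rfl
  have := key.symm.trans key2
  field_simp at this
  linarith [this]

set_option maxHeartbeats 1000000 in
/-- Gaussian integral identity: `∫ Φ(a + bx) φ(x) dx = Φ(a / √(1 + b²))`. -/
theorem integral_cdf_mul_pdf (a b : ℝ) :
    ∫ x : ℝ, stdCdf (a + b * x) * stdPdf x = stdCdf (a / Real.sqrt (1 + b ^ 2)) := by
  have hmeas : AEStronglyMeasurable (fun p : ℝ × ℝ => stdPdf (p.2 + b * p.1) * stdPdf p.1)
      (volume.prod (volume.restrict (Set.Iic a))) :=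
    ((measurable_stdPdf.comp (measurable_snd.add (measurable_fst.const_mul b))).mul
      (measurable_stdPdf.comp measurable_fst)).aestronglyMeasurable
  have hnn : ∀ x s : ℝ, 0 ≤ stdPdf (s + b * x) * stdPdf x := fun x s =>
    mul_nonneg (stdPdf_nonneg _) (stdPdf_nonneg _)
  have hint_shift : ∀ x : ℝ, ∫ s : ℝ, stdPdf (s + b * x) = 1 := fun x => by
    rw [integral_add_right_eq_self stdPdf (b * x), integral_stdPdf]
  have hInt : Integrable (Function.uncurry fun x s => stdPdf (s + b * x) * stdPdf x)
      (volume.prod (volume.restrict (Set.Iic a))) := by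
    show Integrable (fun p : ℝ × ℝ => stdPdf (p.2 + b * p.1) * stdPdf p.1)
      (volume.prod (volume.restrict (Set.Iic a)))
    refine (integrable_prod_iff hmeas).mpr ⟨?_, ?_⟩
    · refine Filter.Eventually.of_forall fun x => ?_
      have h5 : Integrable (fun s : ℝ => stdPdf (s + b * x) * stdPdf x)
          (volume.restrict (Set.Iic a)) :=
        ((integrable_stdPdf.comp_add_right (b * x)).mul_const _).restrict
      exact h5
    · refine Integrable.mono' integrable_stdPdf
        (hmeas.norm.integral_prod_right') (Filter.Eventually.of_forall fun x => ?_)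
      show ‖∫ s in Set.Iic a, ‖stdPdf (s + b * x) * stdPdf x‖‖ ≤ stdPdf x
      have h1 : ∫ s in Set.Iic a, ‖stdPdf (s + b * x) * stdPdf x‖
          = (∫ s in Set.Iic a, stdPdf (s + b * x)) * stdPdf x := by
        simp_rw [Real.norm_eq_abs, abs_of_nonneg (hnn x _)]
        exact integral_mul_const _ _
      have h2 : ∫ s in Set.Iic a, stdPdf (s + b * x) ≤ 1 := by
        rw [← hint_shift x]
        exact setIntegral_le_integral (integrable_stdPdf.comp_add_right (b * x))
          (Filter.Eventually.of_forall fun s => stdPdf_nonneg _)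
      have h3 : 0 ≤ ∫ s in Set.Iic a, stdPdf (s + b * x) :=
        integral_nonneg fun s => stdPdf_nonneg _
      rw [Real.norm_eq_abs, h1, abs_of_nonneg (mul_nonneg h3 (stdPdf_nonneg _))]
      calc (∫ s in Set.Iic a, stdPdf (s + b * x)) * stdPdf x
          ≤ 1 * stdPdf x := by
            exact mul_le_mul_of_nonneg_right h2 (stdPdf_nonneg _)
        _ = stdPdf x := one_mul _
  calc ∫ x : ℝ, stdCdf (a + b * x) * stdPdf x
      = ∫ x : ℝ, (∫ s in Set.Iic a, stdPdf (s + b * x)) * stdPdf x := by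
        simp_rw [stdCdf_eq_shift]
    _ = ∫ x : ℝ, ∫ s in Set.Iic a, stdPdf (s + b * x) * stdPdf x := by
        congr 1
        funext x
        exact (integral_mul_const _ _).symm
    _ = ∫ s in Set.Iic a, ∫ x : ℝ, stdPdf (s + b * x) * stdPdf x :=
        integral_integral_swap hInt
    _ = ∫ s in Set.Iic a,
          (Real.sqrt (2 * π * (1 + b ^ 2)))⁻¹ * Real.exp (-s ^ 2 / (2 * (1 + b ^ 2))) := by
        simp_rw [gaussian_product_integral]
    _ = stdCdf (a / Real.sqrt (1 + b ^ 2)) := scaled_cdf b a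
end

section
/- For all a, b ∈ ℝ, ∫_{−∞}^{∞} x Φ(a + bx) φ(x) dx = (b / √(1 + b²)) φ(a / √(1 + b²)), where φ and Φ are the standard normal PDF and CDF. -/
open MeasureTheory Real

lemma stdPdf_eq (x : ℝ) : stdPdf x = (Real.sqrt (2 * π))⁻¹ * Real.exp (-(1/2) * x ^ 2) := by
  unfold stdPdf; congr 1; congr 1; ring

lemma continuous_stdPdf : Continuous stdPdf := by
  unfold stdPdf
  fun_prop

lemma integrable_id_mul_stdPdf : Integrable (fun x => x * stdPdf x) := by
  simp_rw [stdPdf_eq]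
  have := (integrable_mul_exp_neg_mul_sq (by norm_num : (0:ℝ) < 1/2)).const_mul
      ((Real.sqrt (2 * π))⁻¹)
  apply this.congr
  filter_upwards with x
  ring

lemma stdPdf_le (x : ℝ) : stdPdf x ≤ (Real.sqrt (2 * π))⁻¹ := by
  unfold stdPdf
  have h1 : Real.exp (-x ^ 2 / 2) ≤ 1 := by
    rw [Real.exp_le_one_iff]
    nlinarith [sq_nonneg x]
  have h2 : (0:ℝ) ≤ (Real.sqrt (2 * π))⁻¹ := by positivity
  nlinarith

lemma stdCdf_nonneg (x : ℝ) : 0 ≤ stdCdf x :=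
  setIntegral_nonneg measurableSet_Iic (fun t _ => stdPdf_nonneg t)

lemma stdCdf_le (x : ℝ) : stdCdf x ≤ ∫ t : ℝ, stdPdf t :=
  setIntegral_le_integral integrable_stdPdf (Filter.Eventually.of_forall stdPdf_nonneg)

lemma hasDerivAt_stdPdf (x : ℝ) : HasDerivAt stdPdf (-x * stdPdf x) x := by
  have h : HasDerivAt (fun y : ℝ => -y ^ 2 / 2) (-x) x := by
    have := ((hasDerivAt_pow 2 x).neg).div_const 2
    refine this.congr_deriv ?_
    ring
  have := (h.exp).const_mul ((Real.sqrt (2 * π))⁻¹)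
  refine this.congr_deriv ?_
  unfold stdPdf
  ring

lemma hasDerivAt_stdCdf (x : ℝ) : HasDerivAt stdCdf (stdPdf x) x := by
  have hrw : ∀ y : ℝ, stdCdf y = stdCdf 0 + ∫ t in (0:ℝ)..y, stdPdf t := by
    intro y
    unfold stdCdf
    rw [← intervalIntegral.integral_Iic_sub_Iic integrable_stdPdf.integrableOn
      integrable_stdPdf.integrableOn]
    ring
  have hd : HasDerivAt (fun y => stdCdf 0 + ∫ t in (0:ℝ)..y, stdPdf t) (stdPdf x) x := by
    apply HasDerivAt.const_add
    exact intervalIntegral.integral_hasDerivAt_right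
      integrable_stdPdf.intervalIntegrable
      (continuous_stdPdf.stronglyMeasurableAtFilter _ _)
      continuous_stdPdf.continuousAt
  exact hd.congr_of_eventuallyEq (Filter.Eventually.of_forall hrw)

lemma continuous_stdCdf : Continuous stdCdf :=
  continuous_iff_continuousAt.mpr fun x => (hasDerivAt_stdCdf x).continuousAt

/-- Gaussian convolution-type identity. -/
lemma integral_stdPdf_mul_stdPdf (a b : ℝ) :
    ∫ x : ℝ, stdPdf (a + b * x) * stdPdf x =
      (Real.sqrt (1 + b ^ 2))⁻¹ * stdPdf (a / Real.sqrt (1 + b ^ 2)) := by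
  have hc : (0:ℝ) < 1 + b ^ 2 := by positivity
  set c : ℝ := 1 + b ^ 2 with hcdef
  have hcne : c ≠ 0 := ne_of_gt hc
  have h2pi : (0:ℝ) < 2 * π := by positivity
  have hs : Real.sqrt (2 * π) * Real.sqrt (2 * π) = 2 * π := Real.mul_self_sqrt h2pi.le
  have hsne : Real.sqrt (2 * π) ≠ 0 := by positivity
  have hscne : Real.sqrt c ≠ 0 := by positivity
  have h1 : ∀ x : ℝ, stdPdf (a + b * x) * stdPdf x
      = ((2 * π)⁻¹ * Real.exp (-a ^ 2 / (2 * c))) *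
        Real.exp (-(c / 2) * (x + a * b / c) ^ 2) := by
    intro x
    unfold stdPdf
    rw [mul_mul_mul_comm, ← Real.exp_add, ← mul_inv, hs, mul_assoc, ← Real.exp_add]
    congr 1
    congr 1
    rw [hcdef]
    field_simp
    ring
  simp_rw [h1]
  rw [integral_const_mul]
  rw [integral_add_right_eq_self (fun x => Real.exp (-(c / 2) * x ^ 2)) (a * b / c)]
  rw [integral_gaussian]
  have hsq : Real.sqrt (π / (c / 2)) = Real.sqrt (2 * π) / Real.sqrt c := by
    rw [show π / (c / 2) = 2 * π / c by field_simp, Real.sqrt_div h2pi.le]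
  rw [hsq]
  have hexp : (-(a / Real.sqrt c) ^ 2 / 2) = -a ^ 2 / (2 * c) := by
    rw [div_pow, Real.sq_sqrt hc.le, neg_div, neg_div, div_div, mul_comm c 2]
  unfold stdPdf
  rw [hexp]
  have hkey : (2 * π)⁻¹ * Real.sqrt (2 * π) = (Real.sqrt (2 * π))⁻¹ := by
    rw [show ((2 * π)⁻¹ : ℝ) = (Real.sqrt (2 * π) * Real.sqrt (2 * π))⁻¹ from by rw [hs],
      mul_inv, mul_assoc, inv_mul_cancel₀ hsne, mul_one]
  linear_combination (Real.exp (-a ^ 2 / (2 * c)) * (Real.sqrt c)⁻¹) * hkey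

/-- Gaussian integral identity:
`∫ x Φ(a + bx) φ(x) dx = (b / √(1 + b²)) φ(a / √(1 + b²))`. -/
theorem integral_id_mul_cdf_mul_pdf (a b : ℝ) :
    ∫ x : ℝ, x * stdCdf (a + b * x) * stdPdf x =
      (b / Real.sqrt (1 + b ^ 2)) * stdPdf (a / Real.sqrt (1 + b ^ 2)) := by
  set u : ℝ → ℝ := fun x => stdCdf (a + b * x) with hu_def
  set u' : ℝ → ℝ := fun x => b * stdPdf (a + b * x) with hu'_def
  set v : ℝ → ℝ := fun x => -stdPdf x with hv_def
  set v' : ℝ → ℝ := fun x => x * stdPdf x with hv'_def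
  have hu : ∀ x, HasDerivAt u (u' x) x := by
    intro x
    have hinner : HasDerivAt (fun y : ℝ => a + b * y) b x := by
      simpa using ((hasDerivAt_id x).const_mul b).const_add a
    have := (hasDerivAt_stdCdf (a + b * x)).comp x hinner
    simpa [u, u', mul_comm, Function.comp_def] using this
  have hv : ∀ x, HasDerivAt v (v' x) x := by
    intro x
    have := (hasDerivAt_stdPdf x).neg
    exact this.congr_deriv (by simp only [v']; ring)
  have hbound : ∃ C, ∀ x : ℝ, ‖u x‖ ≤ C := by
    refine ⟨∫ t : ℝ, stdPdf t, fun x => ?_⟩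
    rw [Real.norm_eq_abs, abs_of_nonneg (stdCdf_nonneg _)]
    exact stdCdf_le _
  have hu_meas : AEStronglyMeasurable u volume :=
    (continuous_stdCdf.comp (by continuity)).aestronglyMeasurable
  have huv' : Integrable (u * v') :=
    integrable_id_mul_stdPdf.bdd_mul hu_meas (Filter.Eventually.of_forall hbound.choose_spec)
  have huv : Integrable (u * v) :=
    integrable_stdPdf.neg.bdd_mul hu_meas (Filter.Eventually.of_forall hbound.choose_spec)
  have hu'v : Integrable (u' * v) := by
    apply integrable_stdPdf.neg.bdd_mul (c := |b| * (Real.sqrt (2 * π))⁻¹)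
    · exact (continuous_const.mul (continuous_stdPdf.comp (by continuity))).aestronglyMeasurable
    · refine Filter.Eventually.of_forall fun x => ?_
      rw [Real.norm_eq_abs, abs_mul, abs_of_nonneg (stdPdf_nonneg _)]
      have := stdPdf_le (a + b * x)
      have hb : (0:ℝ) ≤ |b| := abs_nonneg b
      nlinarith
  have key := integral_mul_deriv_eq_deriv_mul_of_integrable (fun x _ => hu x) (fun x _ => hv x) huv' hu'v huv
  have hL : ∫ x : ℝ, x * stdCdf (a + b * x) * stdPdf x = ∫ x : ℝ, u x * v' x := by
    congr 1; funext x; simp only [u, v']; ring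
  have hR : (- ∫ x : ℝ, u' x * v x) = b * ∫ x : ℝ, stdPdf (a + b * x) * stdPdf x := by
    rw [← integral_neg, ← integral_const_mul]
    congr 1; funext x; simp only [u', v']; ring
  rw [hL, key, hR, integral_stdPdf_mul_stdPdf a b]
  ring
end
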